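/- Finite model property with an explicit bound for LC⊳: if a formula φ of length l is not LC⊳-valid, then φ is refuted at the root of a finite rooted LC⊳-model having at most l+1 worlds. -/
import Mathlib


/-- Formulas: atoms, ⊤, ⊥, ∧, ∨, →, irreflexive implication ⊳ (`iimp`), later ▷ (`later`). -/
inductive Fm : Type where
  | atom : ℕ → Fm
  | top : Fm
  | bot : Fm
  | and : Fm → Fm → Fm
  | or : Fm → Fm → Fm
  | imp : Fm → Fm → Fm
  | iimp : Fm → Fm → Fm
  | later : Fm → Fm
deriving DecidableEq

/-- A KM-model: nonempty set of worlds, transitive converse-well-founded relation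
(no infinite ascending chain), persistent valuation of atoms. -/
structure KMModel where
  W : Type
  nonempty : Nonempty W
  R : W → W → Prop
  trans : ∀ {x y z}, R x y → R y z → R x z
  cwf : ¬ ∃ f : ℕ → W, ∀ n, R (f n) (f (n + 1))
  val : ℕ → W → Prop
  persist : ∀ p {w x}, val p w → R w x → val p x

/-- Kripke forcing in a KM-model. -/
def KMModel.force (M : KMModel) : Fm → M.W → Prop
  | .atom p, w => M.val p w
  | .top, _ => True
  | .bot, _ => False
  | .and a b, w => M.force a w ∧ M.force b w
  | .or a b, w => M.force a w ∨ M.force b w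
  | .imp a b, w => ∀ x, (w = x ∨ M.R w x) → M.force a x → M.force b x
  | .iimp a b, w => ∀ x, M.R w x → M.force a x → M.force b x
  | .later a, w => ∀ x, M.R w x → M.force a x

/-- An LC⊳-model is a KM-model whose relation is moreover connected. -/
structure LCModel extends KMModel where
  conn : ∀ x y : W, x = y ∨ R x y ∨ R y x

/-- KM-validity. -/
def KMValid (φ : Fm) : Prop :=
  ∀ (M : KMModel) (w : M.W), M.force φ w

/-- LC⊳-validity. -/
def LCValid (φ : Fm) : Prop :=
  ∀ (M : LCModel) (w : M.W), M.toKMModel.force φ w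

/-- ω-semantics forcing (worlds are positive integers). -/
def wforce (η : ℕ → ℕ+ → Prop) : Fm → ℕ+ → Prop
  | .atom p, j => η p j
  | .top, _ => True
  | .bot, _ => False
  | .and a b, j => wforce η a j ∧ wforce η b j
  | .or a b, j => wforce η a j ∨ wforce η b j
  | .imp a b, j => ∀ k ≤ j, wforce η a k → wforce η b k
  | .iimp a b, j => ∀ k < j, wforce η a k → wforce η b k
  | .later a, j => ∀ k < j, wforce η a k

/-- `iimps G` is the set {γ ⊳ γ' | (γ,γ') ∈ G}. -/
def iimps (G : Finset (Fm × Fm)) : Finset Fm := G.image fun p => Fm.iimp p.1 p.2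

/-- `impsOf G` is the set {γ → γ' | (γ,γ') ∈ G}. -/
def impsOf (G : Finset (Fm × Fm)) : Finset Fm := G.image fun p => Fm.imp p.1 p.2

/-- `laters Θ` is the set {▷θ | θ ∈ Θ}. -/
def laters (Θ : Finset Fm) : Finset Fm := Θ.image Fm.later

def Fm.isAtom : Fm → Prop
  | .atom _ => True
  | _ => False

/-- The sequent calculus SC_LC⊳ on sequents of finite sets of formulas. -/
inductive DerivLC : Finset Fm → Finset Fm → Prop where
  | topR (Γ Δ) : DerivLC Γ (insert Fm.top Δ)
  | botL (Γ Δ) : DerivLC (insert Fm.bot Γ) Δ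
  | id (Γ Δ φ) : DerivLC (insert φ Γ) (insert φ Δ)
  | andL (Γ Δ φ ψ) : DerivLC (insert φ (insert ψ Γ)) Δ → DerivLC (insert (φ.and ψ) Γ) Δ
  | andR (Γ Δ φ ψ) : DerivLC Γ (insert φ Δ) → DerivLC Γ (insert ψ Δ) →
      DerivLC Γ (insert (φ.and ψ) Δ)
  | orL (Γ Δ φ ψ) : DerivLC (insert φ Γ) Δ → DerivLC (insert ψ Γ) Δ →
      DerivLC (insert (φ.or ψ) Γ) Δ
  | orR (Γ Δ φ ψ) : DerivLC Γ (insert φ (insert ψ Δ)) → DerivLC Γ (insert (φ.or ψ) Δ)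
  | impL (Γ Δ φ ψ) : DerivLC (insert (φ.iimp ψ) Γ) (insert φ Δ) →
      DerivLC (insert ψ (insert (φ.iimp ψ) Γ)) Δ →
      DerivLC (insert (φ.imp ψ) Γ) Δ
  | impR (Γ Δ φ ψ) : DerivLC (insert φ Γ) (insert ψ Δ) → DerivLC Γ (insert (φ.iimp ψ) Δ) →
      DerivLC Γ (insert (φ.imp ψ) Δ)
  | step (Sl Sr Θ Φ : Finset Fm) (G D : Finset (Fm × Fm)) :
      (∀ a ∈ Sl, a.isAtom) → (∀ a ∈ Sr, a.isAtom) →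
      Sl ∩ Sr = ∅ → Fm.bot ∉ Sl → Fm.top ∉ Sr →
      (D.Nonempty ∨ Φ.Nonempty) →
      (∀ pq ∈ D, DerivLC
          (Sl ∪ impsOf G ∪ Θ ∪ laters Θ ∪ ({Fm.iimp pq.1 pq.2, pq.1} : Finset Fm))
          (insert pq.2 ((impsOf D).erase (Fm.imp pq.1 pq.2) ∪ Φ))) →
      (∀ χ ∈ Φ, DerivLC
          (Sl ∪ Θ ∪ laters Θ ∪ impsOf G ∪ ({Fm.later χ} : Finset Fm))
          (impsOf D ∪ Φ)) →
      DerivLC (Sl ∪ laters Θ ∪ iimps G) (iimps D ∪ laters Φ ∪ Sr)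

/-- The sequent calculus SC_KM: same static rules, transitional rules (⊳R) and (▷R). -/
inductive DerivKM : Finset Fm → Finset Fm → Prop where
  | topR (Γ Δ) : DerivKM Γ (insert Fm.top Δ)
  | botL (Γ Δ) : DerivKM (insert Fm.bot Γ) Δ
  | id (Γ Δ φ) : DerivKM (insert φ Γ) (insert φ Δ)
  | andL (Γ Δ φ ψ) : DerivKM (insert φ (insert ψ Γ)) Δ → DerivKM (insert (φ.and ψ) Γ) Δ
  | andR (Γ Δ φ ψ) : DerivKM Γ (insert φ Δ) → DerivKM Γ (insert ψ Δ) →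
      DerivKM Γ (insert (φ.and ψ) Δ)
  | orL (Γ Δ φ ψ) : DerivKM (insert φ Γ) Δ → DerivKM (insert ψ Γ) Δ →
      DerivKM (insert (φ.or ψ) Γ) Δ
  | orR (Γ Δ φ ψ) : DerivKM Γ (insert φ (insert ψ Δ)) → DerivKM Γ (insert (φ.or ψ) Δ)
  | impL (Γ Δ φ ψ) : DerivKM (insert (φ.iimp ψ) Γ) (insert φ Δ) →
      DerivKM (insert ψ (insert (φ.iimp ψ) Γ)) Δ →
      DerivKM (insert (φ.imp ψ) Γ) Δ
  | impR (Γ Δ φ ψ) : DerivKM (insert φ Γ) (insert ψ Δ) → DerivKM Γ (insert (φ.iimp ψ) Δ) →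
      DerivKM Γ (insert (φ.imp ψ) Δ)
  | iimpR (Sl Sr Θ Φ : Finset Fm) (G D : Finset (Fm × Fm)) (φ ψ : Fm) :
      (∀ a ∈ Sl, a.isAtom) → (∀ a ∈ Sr, a.isAtom) →
      Sl ∩ Sr = ∅ → Fm.bot ∉ Sl → Fm.top ∉ Sr →
      DerivKM (Sl ∪ Θ ∪ laters Θ ∪ impsOf G ∪ ({Fm.iimp φ ψ, φ} : Finset Fm)) {ψ} →
      DerivKM (Sl ∪ laters Θ ∪ iimps G) (insert (Fm.iimp φ ψ) (iimps D ∪ laters Φ ∪ Sr))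
  | laterR (Sl Sr Θ Φ : Finset Fm) (G D : Finset (Fm × Fm)) (φ : Fm) :
      (∀ a ∈ Sl, a.isAtom) → (∀ a ∈ Sr, a.isAtom) →
      Sl ∩ Sr = ∅ → Fm.bot ∉ Sl → Fm.top ∉ Sr →
      DerivKM (Sl ∪ Θ ∪ laters Θ ∪ impsOf G ∪ ({Fm.later φ} : Finset Fm)) {φ} →
      DerivKM (Sl ∪ laters Θ ∪ iimps G) (insert (Fm.later φ) (iimps D ∪ laters Φ ∪ Sr))

/-- A sequent is refutable (over LC⊳-models) if some world of some LC⊳-model forces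
every antecedent formula and no succedent formula. -/
def RefutableLC (Γ Δ : Finset Fm) : Prop :=
  ∃ (M : LCModel) (w : M.W),
    (∀ γ ∈ Γ, M.toKMModel.force γ w) ∧ ∀ δ ∈ Δ, ¬ M.toKMModel.force δ w

/-- A sequent is refutable (over KM-models) if some world of some KM-model forces
every antecedent formula and no succedent formula. -/
def RefutableKM (Γ Δ : Finset Fm) : Prop :=
  ∃ (M : KMModel) (w : M.W),
    (∀ γ ∈ Γ, M.force γ w) ∧ ∀ δ ∈ Δ, ¬ M.force δ w

/-- Length of a formula: number of symbol occurrences. -/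
def Fm.len : Fm → ℕ
  | .atom _ => 1
  | .top => 1
  | .bot => 1
  | .and a b => a.len + b.len + 1
  | .or a b => a.len + b.len + 1
  | .imp a b => a.len + b.len + 1
  | .iimp a b => a.len + b.len + 1
  | .later a => a.len + 1

/-- An explicit numeric code for formulas. -/
def Fm.code : Fm → ℕ
  | .atom p => Nat.pair 0 p
  | .top => Nat.pair 1 0
  | .bot => Nat.pair 2 0
  | .and a b => Nat.pair 3 (Nat.pair a.code b.code)
  | .or a b => Nat.pair 4 (Nat.pair a.code b.code)
  | .imp a b => Nat.pair 5 (Nat.pair a.code b.code)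
  | .iimp a b => Nat.pair 6 (Nat.pair a.code b.code)
  | .later a => Nat.pair 7 a.code

/-- Formulas with no ⊳ and no ▷. -/
def Fm.noModal : Fm → Prop
  | .atom _ => True
  | .top => True
  | .bot => True
  | .and a b => a.noModal ∧ b.noModal
  | .or a b => a.noModal ∧ b.noModal
  | .imp a b => a.noModal ∧ b.noModal
  | .iimp _ _ => False
  | .later _ => False

/-- Classical Boolean evaluation (junk values on the modal connectives). -/
def Fm.beval (v : ℕ → Bool) : Fm → Bool
  | .atom p => v p
  | .top => true
  | .bot => false
  | .and a b => a.beval v && b.beval v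
  | .or a b => a.beval v || b.beval v
  | .imp a b => !(a.beval v) || b.beval v
  | .iimp _ _ => false
  | .later _ => false

/-- Subformulas. -/
def subs : Fm → Finset Fm
  | .atom p => {.atom p}
  | .top => {.top}
  | .bot => {.bot}
  | .and a b => insert (Fm.and a b) (subs a ∪ subs b)
  | .or a b => insert (Fm.or a b) (subs a ∪ subs b)
  | .imp a b => insert (Fm.imp a b) (subs a ∪ subs b)
  | .iimp a b => insert (Fm.iimp a b) (subs a ∪ subs b)
  | .later a => insert (Fm.later a) (subs a)

lemma mem_subs_self (ψ : Fm) : ψ ∈ subs ψ := by cases ψ <;> simp [subs]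

lemma card_subs_le (ψ : Fm) : (subs ψ).card ≤ ψ.len := by
  induction ψ with
  | atom p => simp [subs, Fm.len]
  | top => simp [subs, Fm.len]
  | bot => simp [subs, Fm.len]
  | and a b iha ihb =>
      have h1 := Finset.card_insert_le (Fm.and a b) (subs a ∪ subs b)
      have h2 := Finset.card_union_le (subs a) (subs b)
      simp only [subs, Fm.len]; omega
  | or a b iha ihb =>
      have h1 := Finset.card_insert_le (Fm.or a b) (subs a ∪ subs b)
      have h2 := Finset.card_union_le (subs a) (subs b)
      simp only [subs, Fm.len]; omega
  | imp a b iha ihb =>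
      have h1 := Finset.card_insert_le (Fm.imp a b) (subs a ∪ subs b)
      have h2 := Finset.card_union_le (subs a) (subs b)
      simp only [subs, Fm.len]; omega
  | iimp a b iha ihb =>
      have h1 := Finset.card_insert_le (Fm.iimp a b) (subs a ∪ subs b)
      have h2 := Finset.card_union_le (subs a) (subs b)
      simp only [subs, Fm.len]; omega
  | later a iha =>
      have h1 := Finset.card_insert_le (Fm.later a) (subs a)
      simp only [subs, Fm.len]; omega

lemma subs_closed (φ : Fm) : ∀ ψ ∈ subs φ, subs ψ ⊆ subs φ := by
  induction φ with
  | atom p => intro ψ h; simp [subs] at h; subst h; simp [subs]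
  | top => intro ψ h; simp [subs] at h; subst h; simp [subs]
  | bot => intro ψ h; simp [subs] at h; subst h; simp [subs]
  | and a b iha ihb =>
      intro ψ h
      simp only [subs, Finset.mem_insert, Finset.mem_union] at h
      rcases h with h | h | h
      · subst h; exact fun _ h => h
      · exact (iha ψ h).trans (by intro t ht; simp [subs]; tauto)
      · exact (ihb ψ h).trans (by intro t ht; simp [subs]; tauto)
  | or a b iha ihb =>
      intro ψ h
      simp only [subs, Finset.mem_insert, Finset.mem_union] at h
      rcases h with h | h | h
      · subst h; exact fun _ h => h
      · exact (iha ψ h).trans (by intro t ht; simp [subs]; tauto)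
      · exact (ihb ψ h).trans (by intro t ht; simp [subs]; tauto)
  | imp a b iha ihb =>
      intro ψ h
      simp only [subs, Finset.mem_insert, Finset.mem_union] at h
      rcases h with h | h | h
      · subst h; exact fun _ h => h
      · exact (iha ψ h).trans (by intro t ht; simp [subs]; tauto)
      · exact (ihb ψ h).trans (by intro t ht; simp [subs]; tauto)
  | iimp a b iha ihb =>
      intro ψ h
      simp only [subs, Finset.mem_insert, Finset.mem_union] at h
      rcases h with h | h | h
      · subst h; exact fun _ h => h
      · exact (iha ψ h).trans (by intro t ht; simp [subs]; tauto)
      · exact (ihb ψ h).trans (by intro t ht; simp [subs]; tauto)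
  | later a iha =>
      intro ψ h
      simp only [subs, Finset.mem_insert] at h
      rcases h with h | h
      · subst h; exact fun _ h => h
      · exact (iha ψ h).trans (by intro t ht; simp [subs]; tauto)

lemma force_persist (M : KMModel) (ψ : Fm) :
    ∀ {x y : M.W}, M.R x y → M.force ψ x → M.force ψ y := by
  induction ψ with
  | atom p => intro x y h hf; exact M.persist p hf h
  | top => intro x y _ _; trivial
  | bot => intro x y _ h; exact h.elim
  | and a b iha ihb => intro x y h hf; exact ⟨iha h hf.1, ihb h hf.2⟩
  | or a b iha ihb =>
      intro x y h hf
      exact hf.elim (fun f => Or.inl (iha h f)) (fun f => Or.inr (ihb h f))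
  | imp a b _ _ =>
      intro x y h hf z hz ha
      exact hf z (Or.inr (hz.elim (fun e => e ▸ h) (fun r => M.trans h r))) ha
  | iimp a b _ _ =>
      intro x y h hf z hz ha
      exact hf z (M.trans h hz) ha
  | later a _ =>
      intro x y h hf z hz
      exact hf z (M.trans h hz)

lemma KMModel.exists_max (M : KMModel) (S : Set M.W) (x0 : M.W) (h0 : x0 ∈ S) :
    ∃ m ∈ S, ∀ z ∈ S, ¬ M.R m z := by
  by_contra hc
  push_neg at hc
  choose g hg1 hg2 using hc
  let f : ℕ → {x // x ∈ S} :=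
    fun n => Nat.rec ⟨x0, h0⟩ (fun _ p => ⟨g p.1 p.2, hg1 p.1 p.2⟩) n
  exact M.cwf ⟨fun n => (f n).1, fun n => hg2 (f n).1 (f n).2⟩


open Classical in
noncomputable def Tset (M : KMModel) (φ : Fm) (x : M.W) : Finset Fm :=
  (subs φ).filter (fun ψ => M.force ψ x)

open Classical in
lemma mem_Tset {M : KMModel} {φ ψ : Fm} {x : M.W} (h : ψ ∈ subs φ) :
    ψ ∈ Tset M φ x ↔ M.force ψ x := by
  simp [Tset, h]

open Classical in
lemma Tset_subset (M : KMModel) (φ : Fm) (x : M.W) : Tset M φ x ⊆ subs φ :=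
  Finset.filter_subset _ _

open Classical in
lemma Tset_mono (M : KMModel) (φ : Fm) {x y : M.W} (h : M.R x y) :
    Tset M φ x ⊆ Tset M φ y := by
  intro ψ hψ
  rw [Tset, Finset.mem_filter] at hψ ⊢
  exact ⟨hψ.1, force_persist M ψ h hψ.2⟩
lemma R_of_ssub (M : LCModel) (φ : Fm) {y m : M.W}
    (h : Tset M.toKMModel φ y ⊂ Tset M.toKMModel φ m) : M.R y m := by
  rcases M.conn y m with e | r | r
  · exact absurd (e ▸ h) (ssubset_irrefl _)
  · exact r
  · exact absurd (Tset_mono M.toKMModel φ r) h.2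

lemma exists_classMax (M : LCModel) (φ : Fm) {w x : M.W} (hx : x = w ∨ M.R w x) :
    ∃ m : M.W, (m = w ∨ M.R w m) ∧ Tset M.toKMModel φ m = Tset M.toKMModel φ x ∧
      ∀ y, M.R m y → Tset M.toKMModel φ m ⊂ Tset M.toKMModel φ y := by
  obtain ⟨m, hmS, hmax⟩ := M.toKMModel.exists_max
    {z | (z = x ∨ M.R x z) ∧ Tset M.toKMModel φ z = Tset M.toKMModel φ x} x
    ⟨Or.inl rfl, rfl⟩
  obtain ⟨hm1, hm2⟩ := hmS
  refine ⟨m, ?_, hm2, ?_⟩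
  · rcases hm1 with e | r
    · exact e ▸ hx
    · exact Or.inr (hx.elim (fun e => e ▸ r) (fun rwx => M.trans rwx r))
  · intro y hy
    have hsub := Tset_mono M.toKMModel φ hy
    refine ⟨hsub, fun hsup => ?_⟩
    have heq : Tset M.toKMModel φ y = Tset M.toKMModel φ m :=
      subset_antisymm hsup hsub
    have hyx : y = x ∨ M.R x y := by
      rcases hm1 with e | r
      · exact Or.inr (e ▸ hy)
      · exact Or.inr (M.trans r hy)
    exact hmax y ⟨hyx, heq.trans hm2⟩ hy

noncomputable def Mfin (M : LCModel) (φ : Fm) (w : M.W) : LCModel where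
  W := {B : Finset Fm // ∃ x : M.W, (x = w ∨ M.R w x) ∧ Tset M.toKMModel φ x = B}
  nonempty := ⟨⟨Tset M.toKMModel φ w, w, Or.inl rfl, rfl⟩⟩
  R A B := A.1 ⊂ B.1
  trans := fun h1 h2 => h1.trans h2
  cwf := by
    rintro ⟨f, hf⟩
    have hm : StrictMono fun n => (f n).1.card :=
      strictMono_nat_of_lt_succ fun n => Finset.card_lt_card (hf n)
    have hb : (f ((subs φ).card + 1)).1.card ≤ (subs φ).card := by
      obtain ⟨x, _, hx⟩ := (f ((subs φ).card + 1)).2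
      exact hx ▸ Finset.card_le_card (Tset_subset M.toKMModel φ x)
    have h2 : (subs φ).card + 1 ≤ (f ((subs φ).card + 1)).1.card := hm.le_apply
    omega
  val p B := Fm.atom p ∈ B.1
  persist := by intro p A B h hR; exact hR.subset h
  conn := by
    rintro ⟨A, x, hx, hA⟩ ⟨B, y, hy, hB⟩
    subst hA hB
    by_cases e : Tset M.toKMModel φ x = Tset M.toKMModel φ y
    · exact Or.inl (Subtype.ext e)
    rcases M.conn x y with e' | r | r
    · exact absurd (e' ▸ rfl) e
    · exact Or.inr (Or.inl ⟨Tset_mono M.toKMModel φ r,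
        fun c => e (subset_antisymm (Tset_mono M.toKMModel φ r) c)⟩)
    · exact Or.inr (Or.inr ⟨Tset_mono M.toKMModel φ r,
        fun c => e (subset_antisymm c (Tset_mono M.toKMModel φ r))⟩)
lemma key (M : LCModel) (φ : Fm) (w : M.W) (ψ : Fm) :
    ψ ∈ subs φ → ∀ (x : M.W) (hx : x = w ∨ M.R w x),
      ((Mfin M φ w).toKMModel.force ψ ⟨Tset M.toKMModel φ x, x, hx, rfl⟩ ↔
        ψ ∈ Tset M.toKMModel φ x) := by
  induction ψ with
  | atom p => intro h x hx; exact Iff.rfl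
  | top =>
      intro h x hx
      exact ⟨fun _ => (mem_Tset h).mpr True.intro, fun _ => True.intro⟩
  | bot =>
      intro h x hx
      exact ⟨fun f => f.elim, fun hm => ((mem_Tset h).mp hm : M.toKMModel.force .bot x).elim⟩
  | and a b iha ihb =>
      intro h x hx
      have ha : a ∈ subs φ := subs_closed φ _ h (by simp [subs, mem_subs_self])
      have hb : b ∈ subs φ := subs_closed φ _ h (by simp [subs, mem_subs_self])
      constructor
      · rintro ⟨f1, f2⟩
        exact (mem_Tset h).mpr ⟨(mem_Tset ha).mp ((iha ha x hx).mp f1),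
          (mem_Tset hb).mp ((ihb hb x hx).mp f2)⟩
      · intro hm
        have hf := (mem_Tset h).mp hm
        exact ⟨(iha ha x hx).mpr ((mem_Tset ha).mpr hf.1),
          (ihb hb x hx).mpr ((mem_Tset hb).mpr hf.2)⟩
  | or a b iha ihb =>
      intro h x hx
      have ha : a ∈ subs φ := subs_closed φ _ h (by simp [subs, mem_subs_self])
      have hb : b ∈ subs φ := subs_closed φ _ h (by simp [subs, mem_subs_self])
      constructor
      · rintro (f1 | f2)
        · exact (mem_Tset h).mpr (Or.inl ((mem_Tset ha).mp ((iha ha x hx).mp f1)))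
        · exact (mem_Tset h).mpr (Or.inr ((mem_Tset hb).mp ((ihb hb x hx).mp f2)))
      · intro hm
        have hf := (mem_Tset h).mp hm
        rcases hf with f1 | f2
        · exact Or.inl ((iha ha x hx).mpr ((mem_Tset ha).mpr f1))
        · exact Or.inr ((ihb hb x hx).mpr ((mem_Tset hb).mpr f2))
  | imp a b iha ihb =>
      intro h x hx
      have ha : a ∈ subs φ := subs_closed φ _ h (by simp [subs, mem_subs_self])
      have hb : b ∈ subs φ := subs_closed φ _ h (by simp [subs, mem_subs_self])
      constructor
      · intro H
        obtain ⟨m, hm, hmT, hmax⟩ := exists_classMax M φ hx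
        rw [← hmT, mem_Tset h]
        intro z hz haz
        rcases hz with e | r
        · subst e
          have h1 := H ⟨Tset M.toKMModel φ x, x, hx, rfl⟩ (Or.inl rfl)
          have h2 : a ∈ Tset M.toKMModel φ x := by
            rw [← hmT]; exact (mem_Tset ha).mpr haz
          have h3 : b ∈ Tset M.toKMModel φ x :=
            (ihb hb x hx).mp (h1 ((iha ha x hx).mpr h2))
          refine (mem_Tset hb).mp ?_
          rw [hmT]; exact h3
        · have hlt := hmax z r
          have hzup : z = w ∨ M.R w z :=
            Or.inr (hm.elim (fun e => e ▸ r) (fun rm => M.trans rm r))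
          have hxz : Tset M.toKMModel φ x ⊂ Tset M.toKMModel φ z := by
            rw [← hmT]; exact hlt
          have h1 := H ⟨Tset M.toKMModel φ z, z, hzup, rfl⟩ (Or.inr hxz)
          exact (mem_Tset hb).mp ((ihb hb z hzup).mp
            (h1 ((iha ha z hzup).mpr ((mem_Tset ha).mpr haz))))
      · intro H
        rintro ⟨Bv, z, hz, rfl⟩ hB hfa
        rcases hB with e | ss
        · have e' : Tset M.toKMModel φ x = Tset M.toKMModel φ z := congrArg Subtype.val e
          have hax : M.toKMModel.force a x := (mem_Tset ha).mp (by
            rw [e']; exact (iha ha z hz).mp hfa)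
          have hbx : M.toKMModel.force b x := (mem_Tset h).mp H x (Or.inl rfl) hax
          exact (ihb hb z hz).mpr (by rw [← e']; exact (mem_Tset hb).mpr hbx)
        · obtain ⟨m, hm, hmT, hmax⟩ := exists_classMax M φ hz
          have hxm : M.R x m := R_of_ssub M φ (by rw [hmT]; exact ss)
          have ham : M.toKMModel.force a m := (mem_Tset ha).mp (by
            rw [hmT]; exact (iha ha z hz).mp hfa)
          have hbm := (mem_Tset h).mp H m (Or.inr hxm) ham
          exact (ihb hb z hz).mpr (by rw [← hmT]; exact (mem_Tset hb).mpr hbm)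
  | iimp a b iha ihb =>
      intro h x hx
      have ha : a ∈ subs φ := subs_closed φ _ h (by simp [subs, mem_subs_self])
      have hb : b ∈ subs φ := subs_closed φ _ h (by simp [subs, mem_subs_self])
      constructor
      · intro H
        obtain ⟨m, hm, hmT, hmax⟩ := exists_classMax M φ hx
        rw [← hmT, mem_Tset h]
        intro z r haz
        have hlt := hmax z r
        have hzup : z = w ∨ M.R w z :=
          Or.inr (hm.elim (fun e => e ▸ r) (fun rm => M.trans rm r))
        have hxz : Tset M.toKMModel φ x ⊂ Tset M.toKMModel φ z := by
          rw [← hmT]; exact hlt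
        have h1 := H ⟨Tset M.toKMModel φ z, z, hzup, rfl⟩ hxz
        exact (mem_Tset hb).mp ((ihb hb z hzup).mp
          (h1 ((iha ha z hzup).mpr ((mem_Tset ha).mpr haz))))
      · intro H
        rintro ⟨Bv, z, hz, rfl⟩ ss hfa
        obtain ⟨m, hm, hmT, hmax⟩ := exists_classMax M φ hz
        have hxm : M.R x m := R_of_ssub M φ (by rw [hmT]; exact ss)
        have ham : M.toKMModel.force a m := (mem_Tset ha).mp (by
          rw [hmT]; exact (iha ha z hz).mp hfa)
        have hbm := (mem_Tset h).mp H m hxm ham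
        exact (ihb hb z hz).mpr (by rw [← hmT]; exact (mem_Tset hb).mpr hbm)
  | later a iha =>
      intro h x hx
      have ha : a ∈ subs φ := subs_closed φ _ h (by simp [subs, mem_subs_self])
      constructor
      · intro H
        obtain ⟨m, hm, hmT, hmax⟩ := exists_classMax M φ hx
        rw [← hmT, mem_Tset h]
        intro z r
        have hlt := hmax z r
        have hzup : z = w ∨ M.R w z :=
          Or.inr (hm.elim (fun e => e ▸ r) (fun rm => M.trans rm r))
        have hxz : Tset M.toKMModel φ x ⊂ Tset M.toKMModel φ z := by
          rw [← hmT]; exact hlt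
        exact (mem_Tset ha).mp ((iha ha z hzup).mp
          (H ⟨Tset M.toKMModel φ z, z, hzup, rfl⟩ hxz))
      · intro H
        rintro ⟨Bv, z, hz, rfl⟩ ss
        obtain ⟨m, hm, hmT, hmax⟩ := exists_classMax M φ hz
        have hxm : M.R x m := R_of_ssub M φ (by rw [hmT]; exact ss)
        have ham : M.toKMModel.force a m := (mem_Tset h).mp H m hxm
        exact (iha ha z hz).mpr (by rw [← hmT]; exact (mem_Tset ha).mpr ham)
/-- finite model property for LC⊳ with bound l+1. -/
theorem lc_fmp (φ : Fm) (h : ¬ LCValid φ) :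
    ∃ (M : LCModel) (r : M.W), Finite M.W ∧ Nat.card M.W ≤ φ.len + 1 ∧
      (∀ x : M.W, x = r ∨ M.R r x) ∧ ¬ M.toKMModel.force φ r := by
  simp only [LCValid, not_forall] at h
  obtain ⟨M, w, hw⟩ := h
  have hcard : ∀ B : (Mfin M φ w).W, B.1.card < φ.len + 1 := by
    rintro ⟨B, z, hz, rfl⟩
    show (Tset M.toKMModel φ z).card < φ.len + 1
    have := Finset.card_le_card (Tset_subset M.toKMModel φ z)
    have := card_subs_le φ
    omega
  have hinj : Function.Injective
      (fun B : (Mfin M φ w).W => (⟨B.1.card, hcard B⟩ : Fin (φ.len + 1))) := by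
    intro A B hAB
    have hc : A.1.card = B.1.card := congrArg Fin.val hAB
    rcases (Mfin M φ w).conn A B with e | r | r
    · exact e
    · exact absurd hc (Nat.ne_of_lt (Finset.card_lt_card r))
    · exact absurd hc.symm (Nat.ne_of_lt (Finset.card_lt_card r))
  refine ⟨Mfin M φ w, ⟨Tset M.toKMModel φ w, w, Or.inl rfl, rfl⟩,
    Finite.of_injective _ hinj, ?_, ?_, ?_⟩
  · calc Nat.card (Mfin M φ w).W ≤ Nat.card (Fin (φ.len + 1)) :=
          Nat.card_le_card_of_injective _ hinj
      _ = φ.len + 1 := by simp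
  · rintro ⟨B, z, hz, rfl⟩
    by_cases e : Tset M.toKMModel φ w = Tset M.toKMModel φ z
    · exact Or.inl (Subtype.ext e.symm)
    · refine Or.inr ?_
      have hsub : Tset M.toKMModel φ w ⊆ Tset M.toKMModel φ z :=
        hz.elim (fun hh => hh ▸ Finset.Subset.refl _) (Tset_mono M.toKMModel φ)
      exact ⟨hsub, fun c => e (subset_antisymm hsub c)⟩
  · intro hf
    exact hw ((mem_Tset (mem_subs_self φ)).mp
      ((key M φ w φ (mem_subs_self φ) w (Or.inl rfl)).mp hf))
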